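/- Let β ≠ 0 be real, m > 0, and L > 0. Set K = m⁴/β². Then for every bounded function φ : ℝ → ℂ with |φ(x)| ≤ m for all x, and every twice continuously differentiable L-periodic function v : ℝ → ℂ, defining the energy E = ∫₀^L |v''(x)|² dx + (1/β)·Re ∫₀^L φ(x)²·conj(v'(x))² dx, one has ∫₀^L |v''(x)|² dx ≤ 2E + K ∫₀^L |v(x)|² dx. -/

import Mathlib

open Complex (I normSq)
open ComplexConjugate

/-- Coercivity of the damping energy functional
`E = ∫₀^L |v''|² + (1/β) Re ∫₀^L φ²·conj(v')²`: with `K = m⁴/β²` one has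
`∫₀^L |v''|² ≤ 2E + K ∫₀^L |v|²` whenever `|φ| ≤ m`. -/
theorem damping_energy_coercivity (β m L : ℝ) (hβ : β ≠ 0) (hm : 0 < m) (hL : 0 < L)
    (K : ℝ) (hK : K = m ^ 4 / β ^ 2)
    (φ : ℝ → ℂ) (hφ : ∀ x : ℝ, ‖φ x‖ ≤ m)
    (v : ℝ → ℂ) (hv : ContDiff ℝ 2 v) (hper : Function.Periodic v L)
    (E : ℝ)
    (hE : E = (∫ x in (0:ℝ)..L, ‖deriv (deriv v) x‖ ^ 2)
      + (1 / β) * (∫ x in (0:ℝ)..L, (φ x) ^ 2 * (conj (deriv v x)) ^ 2).re) :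
    (∫ x in (0:ℝ)..L, ‖deriv (deriv v) x‖ ^ 2) ≤
      2 * E + K * ∫ x in (0:ℝ)..L, ‖v x‖ ^ 2 := by
  set A := (∫ x in (0:ℝ)..L, ‖deriv (deriv v) x‖ ^ 2) with hA
  set C := (∫ x in (0:ℝ)..L, ‖v x‖ ^ 2) with hC
  set R := (∫ x in (0:ℝ)..L, (φ x) ^ 2 * (conj (deriv v x)) ^ 2).re with hR
  -- smoothness facts
  have hv2 : ContDiff ℝ ((1:ℕ)+1) v := by exact_mod_cast hv
  have hv' : ContDiff ℝ 1 (deriv v) := (contDiff_succ_iff_deriv.mp hv2).2.2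
  have cv : Continuous v := hv.continuous
  have cv1 : Continuous (deriv v) := hv'.continuous
  have cv2 : Continuous (deriv (deriv v)) := hv'.continuous_deriv le_rfl
  have hd : ∀ x, HasDerivAt v (deriv v x) x := fun x =>
    ((hv.differentiable (by norm_num)) x).hasDerivAt
  have hd2 : ∀ x, HasDerivAt (deriv v) (deriv (deriv v) x) x := fun x =>
    ((hv'.differentiable one_ne_zero) x).hasDerivAt
  have hper1 : Function.Periodic (deriv v) L := by
    intro x
    have hfun : (fun y => v (y + L)) = v := funext hper
    calc deriv v (x + L) = deriv (fun y => v (y + L)) x := (deriv_comp_add_const v L x).symm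
      _ = deriv v x := by rw [hfun]
  -- continuity of integrands
  have contF : Continuous (fun x =>
      conj (deriv v x) * deriv v x + conj (v x) * deriv (deriv v) x) :=
    ((continuous_star.comp cv1).mul cv1).add ((continuous_star.comp cv).mul cv2)
  have contF' : Continuous (fun x => (conj (v x) * deriv (deriv v) x).re) :=
    Complex.continuous_re.comp ((continuous_star.comp cv).mul cv2)
  have contF1 : Continuous (fun x => (conj (deriv v x) * deriv v x).re) :=
    Complex.continuous_re.comp ((continuous_star.comp cv1).mul cv1)
  have contA : Continuous (fun x => ‖deriv (deriv v) x‖ ^ 2) := (cv2.norm.pow 2)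
  have contC : Continuous (fun x => ‖v x‖ ^ 2) := (cv.norm.pow 2)
  have contD : Continuous (fun x => ‖deriv v x‖ ^ 2) := (cv1.norm.pow 2)
  -- integration by parts
  have hIBP : (∫ x in (0:ℝ)..L,
      (conj (deriv v x) * deriv v x + conj (v x) * deriv (deriv v) x)) = 0 := by
    have hder : ∀ x ∈ Set.uIcc (0:ℝ) L, HasDerivAt (fun y => conj (v y) * deriv v y)
        (conj (deriv v x) * deriv v x + conj (v x) * deriv (deriv v) x) x := by
      intro x _
      have h1 : HasDerivAt (fun y => conj (v y)) (conj (deriv v x)) x := (hd x).star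
      exact h1.mul (hd2 x)
    rw [intervalIntegral.integral_eq_sub_of_hasDerivAt hder (contF.intervalIntegrable 0 L)]
    have h1 : v L = v 0 := by simpa using hper 0
    have h2 : deriv v L = deriv v 0 := by simpa using hper1 0
    rw [h1, h2]; ring
  -- real part of IBP
  have hre : (∫ x in (0:ℝ)..L,
      ((conj (deriv v x) * deriv v x).re + (conj (v x) * deriv (deriv v) x).re)) = 0 := by
    have h := Complex.reCLM.intervalIntegral_comp_comm
      (μ := MeasureTheory.volume) (a := (0:ℝ)) (b := L) (contF.intervalIntegrable 0 L)
    simpa [hIBP, Complex.add_re] using h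
  have hpoint : ∀ z : ℂ, (conj z * z).re = ‖z‖ ^ 2 := by
    intro z
    rw [mul_comm, Complex.mul_conj, Complex.ofReal_re, Complex.sq_norm]
  have hsplit : (∫ x in (0:ℝ)..L, ‖deriv v x‖ ^ 2)
      = - ∫ x in (0:ℝ)..L, (conj (v x) * deriv (deriv v) x).re := by
    rw [intervalIntegral.integral_add (contF1.intervalIntegrable 0 L)
      (contF'.intervalIntegrable 0 L)] at hre
    have h5 : (∫ x in (0:ℝ)..L, (conj (deriv v x) * deriv v x).re)
        = ∫ x in (0:ℝ)..L, ‖deriv v x‖ ^ 2 := by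
      apply intervalIntegral.integral_congr; intro x _; exact hpoint (deriv v x)
    linarith [hre, h5]
  set D := (∫ x in (0:ℝ)..L, ‖deriv v x‖ ^ 2) with hD
  -- Young inequality with ε = |β|/m²
  set ε := |β| / m ^ 2 with hε
  have hβ' : (0:ℝ) < |β| := abs_pos.mpr hβ
  have hεpos : 0 < ε := by positivity
  have hYoung : D ≤ (ε / 2) * A + (1 / (2 * ε)) * C := by
    rw [hsplit]
    have hmono : (∫ x in (0:ℝ)..L, -(conj (v x) * deriv (deriv v) x).re)
        ≤ ∫ x in (0:ℝ)..L, ((ε / 2) * ‖deriv (deriv v) x‖ ^ 2 + (1 / (2 * ε)) * ‖v x‖ ^ 2) := by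
      apply intervalIntegral.integral_mono_on hL.le (contF'.neg.intervalIntegrable 0 L)
        ((((continuous_const.mul contA)).add ((continuous_const.mul contC))).intervalIntegrable 0 L)
      intro x _
      have h1 : -(conj (v x) * deriv (deriv v) x).re ≤ ‖v x‖ * ‖deriv (deriv v) x‖ := by
        have habs := Complex.abs_re_le_norm (conj (v x) * deriv (deriv v) x)
        have h2 : ‖conj (v x) * deriv (deriv v) x‖
            = ‖v x‖ * ‖deriv (deriv v) x‖ := by
          simp
        rw [h2] at habs
        have := neg_abs_le ((conj (v x) * deriv (deriv v) x).re)
        linarith [le_abs_self ((conj (v x) * deriv (deriv v) x).re)]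
      have h3 : ‖v x‖ * ‖deriv (deriv v) x‖
          ≤ (ε / 2) * ‖deriv (deriv v) x‖ ^ 2 + (1 / (2 * ε)) * ‖v x‖ ^ 2 := by
        rw [← sub_nonneg]
        have key : (ε / 2) * ‖deriv (deriv v) x‖ ^ 2 + (1 / (2 * ε)) * ‖v x‖ ^ 2
            - ‖v x‖ * ‖deriv (deriv v) x‖
            = (ε * ‖deriv (deriv v) x‖ - ‖v x‖) ^ 2 / (2 * ε) := by
          field_simp; ring
        rw [key]; positivity
      exact h1.trans h3
    calc - ∫ x in (0:ℝ)..L, (conj (v x) * deriv (deriv v) x).re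
        = ∫ x in (0:ℝ)..L, -(conj (v x) * deriv (deriv v) x).re := by
          rw [intervalIntegral.integral_neg]
      _ ≤ ∫ x in (0:ℝ)..L, ((ε / 2) * ‖deriv (deriv v) x‖ ^ 2 + (1 / (2 * ε)) * ‖v x‖ ^ 2) :=
          hmono
      _ = (ε / 2) * A + (1 / (2 * ε)) * C := by
          rw [intervalIntegral.integral_add (f := fun x => (ε / 2) * ‖deriv (deriv v) x‖ ^ 2)
            (g := fun x => (1 / (2 * ε)) * ‖v x‖ ^ 2) ((continuous_const.mul contA).intervalIntegrable 0 L)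
            ((continuous_const.mul contC).intervalIntegrable 0 L),
            intervalIntegral.integral_const_mul, intervalIntegral.integral_const_mul]
  have hDnonneg : 0 ≤ D := intervalIntegral.integral_nonneg hL.le (fun u _ => by positivity)
  have hAnonneg : 0 ≤ A := intervalIntegral.integral_nonneg hL.le (fun u _ => by positivity)
  have hCnonneg : 0 ≤ C := intervalIntegral.integral_nonneg hL.le (fun u _ => by positivity)
  -- bound on R
  have hRbound : |R| ≤ m ^ 2 * D := by
    by_cases hint : IntervalIntegrable (fun x => (φ x) ^ 2 * (conj (deriv v x)) ^ 2)
        MeasureTheory.volume 0 L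
    · have h1 : |R| ≤ ‖∫ x in (0:ℝ)..L, (φ x) ^ 2 * (conj (deriv v x)) ^ 2‖ := by
        rw [hR]; exact Complex.abs_re_le_norm _
      have h2 : ‖∫ x in (0:ℝ)..L, (φ x) ^ 2 * (conj (deriv v x)) ^ 2‖
          ≤ ∫ x in (0:ℝ)..L, ‖(φ x) ^ 2 * (conj (deriv v x)) ^ 2‖ :=
        intervalIntegral.norm_integral_le_integral_norm hL.le
      have h3 : (∫ x in (0:ℝ)..L, ‖(φ x) ^ 2 * (conj (deriv v x)) ^ 2‖)
          ≤ ∫ x in (0:ℝ)..L, m ^ 2 * ‖deriv v x‖ ^ 2 := by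
        apply intervalIntegral.integral_mono_on hL.le hint.norm
          ((continuous_const.mul contD).intervalIntegrable 0 L)
        intro x _
        have hx : ‖(φ x) ^ 2 * (conj (deriv v x)) ^ 2‖
            = ‖φ x‖ ^ 2 * ‖deriv v x‖ ^ 2 := by
          simp
        rw [hx]
        have h0 : (0:ℝ) ≤ ‖φ x‖ := norm_nonneg _
        have hm' := hφ x
        have hsq : ‖φ x‖ ^ 2 ≤ m ^ 2 := by nlinarith
        exact mul_le_mul_of_nonneg_right hsq (sq_nonneg _)
      have h4 : (∫ x in (0:ℝ)..L, m ^ 2 * ‖deriv v x‖ ^ 2) = m ^ 2 * D := by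
        rw [intervalIntegral.integral_const_mul]
      linarith
    · rw [hR, intervalIntegral.integral_undef hint]
      simpa using mul_nonneg (sq_nonneg m) hDnonneg
  -- conclude
  have hεA : (2 * m ^ 2 / |β|) * ((ε / 2) * A + (1 / (2 * ε)) * C) = A + K * C := by
    have habs2 : |β| * |β| = β ^ 2 := by rw [abs_mul_abs_self]; ring
    have e1 : (2 * m ^ 2 / |β|) * (ε / 2) = 1 := by
      rw [hε]; field_simp
    have e2 : (2 * m ^ 2 / |β|) * (1 / (2 * ε)) = m ^ 4 / β ^ 2 := by
      rw [hε, ← habs2]; field_simp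
    calc (2 * m ^ 2 / |β|) * ((ε / 2) * A + (1 / (2 * ε)) * C)
        = ((2 * m ^ 2 / |β|) * (ε / 2)) * A + ((2 * m ^ 2 / |β|) * (1 / (2 * ε))) * C := by
          ring
      _ = A + K * C := by rw [e1, e2, hK]; ring
  have hmain : -(2 / β) * R ≤ A + K * C := by
    have h1 : -(2 / β) * R ≤ (2 / |β|) * |R| := by
      have habs : |(2 / β) * R| = (2 / |β|) * |R| := by
        rw [abs_mul, abs_div]; norm_num
      nlinarith [neg_abs_le ((2 / β) * R)]
    have h2 : (2 / |β|) * |R| ≤ (2 / |β|) * (m ^ 2 * D) := by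
      apply mul_le_mul_of_nonneg_left hRbound; positivity
    have h3 : (2 / |β|) * (m ^ 2 * D) ≤ (2 * m ^ 2 / |β|) * ((ε / 2) * A + (1 / (2 * ε)) * C) := by
      have heq : (2 / |β|) * (m ^ 2 * D) = (2 * m ^ 2 / |β|) * D := by ring
      rw [heq]
      apply mul_le_mul_of_nonneg_left hYoung; positivity
    linarith [hεA ▸ h3]
  rw [hE]
  have hcomb : (2:ℝ) * (1 / β * R) = (2 / β) * R := by ring
  linarith [hmain, hcomb]
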